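/- In the braid group B_n (with Artin generators σ_1,…,σ_{n−1}), for 1 ≤ p < q ≤ n define a_{p,q} = σ_p σ_{p+1} ⋯ σ_{q−2} σ_{q−1} σ_{q−2}^{−1} ⋯ σ_p^{−1}. Then for all 1 ≤ p < q < r ≤ n, the relation a_{p,q} a_{q,r} = a_{q,r} a_{p,r} holds. -/

import Mathlib

/-- Relations of the braid group `B_n` on generators `σ_1, …, σ_{n-1}`
(indexed by natural numbers; the generators of index `0` or `≥ n` are killed,
so that the presented group is exactly `B_n`). -/
def braidRels (n : ℕ) : Set (FreeGroup ℕ) :=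
  {r | (∃ i j : ℕ, 1 ≤ i ∧ i + 2 ≤ j ∧ j ≤ n - 1 ∧
          r = FreeGroup.of i * FreeGroup.of j * (FreeGroup.of i)⁻¹ * (FreeGroup.of j)⁻¹) ∨
       (∃ i : ℕ, 1 ≤ i ∧ i + 1 ≤ n - 1 ∧
          r = FreeGroup.of i * FreeGroup.of (i + 1) * FreeGroup.of i *
              (FreeGroup.of (i + 1) * FreeGroup.of i * FreeGroup.of (i + 1))⁻¹) ∨
       (∃ i : ℕ, (i = 0 ∨ n ≤ i) ∧ r = FreeGroup.of i)}

/-- The braid group `B_n`. -/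
def BraidGroup (n : ℕ) : Type := PresentedGroup (braidRels n)

instance (n : ℕ) : Group (BraidGroup n) := by unfold BraidGroup; infer_instance

/-- The Artin generator `σ_i` of `B_n` (nontrivial for `1 ≤ i ≤ n-1`). -/
def σ (n i : ℕ) : BraidGroup n := PresentedGroup.of i

/-- `δ_{p,q} = σ_p σ_{p+1} ⋯ σ_{q-1}` (equal to `1` when `q ≤ p`). -/
def δδ (n p q : ℕ) : BraidGroup n :=
  ((List.range (q - p)).map (fun k => σ n (p + k))).prod

/-- The Birman–Ko–Lee generator
`a_{p,q} = σ_p ⋯ σ_{q-2} σ_{q-1} σ_{q-2}⁻¹ ⋯ σ_p⁻¹ = δ_{p,q-1} σ_{q-1} δ_{p,q-1}⁻¹`. -/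
def a (n p q : ℕ) : BraidGroup n :=
  δδ n p (q - 1) * σ n (q - 1) * (δδ n p (q - 1))⁻¹

/-- A braid of `B_n` is `σ_i`-positive if it is represented by a word in the
letters `σ_j^{±1}` containing at least one `σ_i`, no `σ_i⁻¹`,
and no letter `σ_j^{±1}` with `j > i`. -/
def SigmaPositive (n i : ℕ) (β : BraidGroup n) : Prop :=
  ∃ w : List (ℕ × Bool),
    ((w.map (fun l => if l.2 then σ n l.1 else (σ n l.1)⁻¹)).prod = β) ∧
    (i, true) ∈ w ∧ (i, false) ∉ w ∧ ∀ l ∈ w, l.1 ≤ i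

section Aux
variable {n : ℕ}

lemma rel_one {r : FreeGroup ℕ} (h : r ∈ braidRels n) :
    (PresentedGroup.mk (braidRels n) r : BraidGroup n) = 1 :=
  (QuotientGroup.eq_one_iff r).2 (Subgroup.subset_normalClosure h)

lemma sigma_eq_mk (i : ℕ) : σ n i = PresentedGroup.mk (braidRels n) (FreeGroup.of i) := rfl

lemma sigma_one {i : ℕ} (h : i = 0 ∨ n ≤ i) : σ n i = 1 := by
  have := rel_one (n := n) (r := FreeGroup.of i) (Or.inr (Or.inr ⟨i, h, rfl⟩))
  rw [sigma_eq_mk]; exact this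

lemma sigma_comm {i j : ℕ} (h : i + 2 ≤ j) : Commute (σ n i) (σ n j) := by
  rcases Nat.eq_zero_or_pos i with hi | hi
  · subst hi; rw [sigma_one (Or.inl rfl)]; exact Commute.one_left _
  rcases le_or_gt n j with hj | hj
  · rw [sigma_one (n := n) (i := j) (Or.inr hj)]; exact Commute.one_right _
  · have hj' : j ≤ n - 1 := by omega
    have h2 := rel_one (n := n) (Or.inl ⟨i, j, hi, h, hj', rfl⟩)
    simp only [map_mul, map_inv, ← sigma_eq_mk] at h2
    have h3 : σ n i * σ n j * (σ n i)⁻¹ = σ n j := mul_inv_eq_one.mp h2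
    have h4 : σ n i * σ n j = σ n j * σ n i := mul_inv_eq_iff_eq_mul.mp h3
    exact h4

lemma sigma_braid {i : ℕ} (h1 : 1 ≤ i) (h2 : i + 2 ≤ n) :
    σ n i * σ n (i + 1) * σ n i = σ n (i + 1) * σ n i * σ n (i + 1) := by
  have hle : i + 1 ≤ n - 1 := by omega
  have h3 := rel_one (n := n) (Or.inr (Or.inl ⟨i, h1, hle, rfl⟩))
  simp only [map_mul, map_inv, ← sigma_eq_mk] at h3
  exact mul_inv_eq_one.mp h3

lemma delta_succ {p m : ℕ} (h : p ≤ m) : δδ n p (m + 1) = δδ n p m * σ n m := by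
  unfold δδ
  rw [show m + 1 - p = (m - p) + 1 by omega, List.range_succ, List.map_append,
    List.prod_append]
  simp only [List.map_cons, List.map_nil, List.prod_cons, List.prod_nil, mul_one]
  rw [show p + (m - p) = m by omega]

lemma sigma_comm_delta {j p m : ℕ} (h : m + 1 ≤ j) : Commute (σ n j) (δδ n p m) := by
  apply Commute.list_prod_right
  intro x hx
  simp only [List.mem_map, List.mem_range] at hx
  obtain ⟨k, hk, rfl⟩ := hx
  exact (sigma_comm (by omega)).symm

lemma sigma_comm_a {j p q : ℕ} (hq : 1 ≤ q) (h : q + 1 ≤ j) : Commute (σ n j) (a n p q) := by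
  unfold a
  have h1 : Commute (σ n j) (δδ n p (q - 1)) := sigma_comm_delta (by omega)
  have h2 : Commute (σ n j) (σ n (q - 1)) := (sigma_comm (i := q - 1) (j := j) (by omega)).symm
  exact (h1.mul_right h2).mul_right h1.inv_right

lemma a_conj {p t : ℕ} (hp : 1 ≤ p) (hpt : p ≤ t) (htn : t + 2 ≤ n) :
    a n p (t + 1) * σ n (t + 1) = σ n (t + 1) * a n p (t + 2) := by
  have hb := sigma_braid (n := n) (i := t) (le_trans hp hpt) htn
  have hc := sigma_comm_delta (n := n) (j := t + 1) (p := p) (m := t) le_rfl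
  set d := δδ n p t with hd
  set x := σ n t with hx
  set y := σ n (t + 1) with hy
  have ha1 : a n p (t + 1) = d * x * d⁻¹ := by
    unfold a; rw [show t + 1 - 1 = t by omega]
  have ha2 : a n p (t + 2) = (d * x) * y * (d * x)⁻¹ := by
    unfold a; rw [show t + 2 - 1 = t + 1 by omega, delta_succ hpt]
  rw [ha1, ha2]
  calc d * x * d⁻¹ * y
      = d * x * (d⁻¹ * y) := by group
    _ = d * x * (y * d⁻¹) := by rw [hc.inv_right.eq.symm]
    _ = d * (x * y * x) * (x⁻¹ * d⁻¹) := by group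
    _ = d * (y * x * y) * (x⁻¹ * d⁻¹) := by rw [hb]
    _ = (d * y) * (x * y * x⁻¹ * d⁻¹) := by group
    _ = (y * d) * (x * y * x⁻¹ * d⁻¹) := by rw [hc.eq]
    _ = y * ((d * x) * y * (d * x)⁻¹) := by group

lemma a_self_succ (q : ℕ) : a n q (q + 1) = σ n q := by
  unfold a δδ
  simp

lemma key (k : ℕ) : ∀ p t : ℕ, 1 ≤ p → p ≤ t → t + 2 + k ≤ n →
    a n p (t + 1) * a n (t + 1) (t + 2 + k) = a n (t + 1) (t + 2 + k) * a n p (t + 2 + k) := by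
  induction k with
  | zero =>
    intro p t hp hpt htn
    rw [show t + 2 + 0 = t + 2 by omega, show a n (t+1) (t+2) = σ n (t+1) from a_self_succ _]
    exact a_conj hp hpt htn
  | succ k IH =>
    intro p t hp hpt htn
    have h1 := a_conj (n := n) (p := t + 1) (t := t + 1 + k) (by omega) (by omega) (by omega)
    have h2 := a_conj (n := n) (p := p) (t := t + 1 + k) hp (by omega) (by omega)
    have IH' := IH p t hp hpt (by omega)
    have hcm : Commute (σ n (t + 1 + k + 1)) (a n p (t + 1)) := sigma_comm_a (by omega) (by omega)
    rw [show t + 1 + k + 1 = t + 2 + k by omega] at h1 h2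
    rw [show t + 1 + k + 2 = t + 2 + (k + 1) by omega] at h1 h2
    rw [show t + 1 + k + 1 = t + 2 + k by omega] at hcm
    set y := σ n (t + 2 + k) with hy
    set A := a n p (t + 1) with hA
    set B := a n (t + 1) (t + 2 + k) with hB
    set C := a n p (t + 2 + k) with hC
    have hB' : a n (t + 1) (t + 2 + (k + 1)) = y⁻¹ * (B * y) :=
      eq_inv_mul_iff_mul_eq.mpr h1.symm
    have hC' : a n p (t + 2 + (k + 1)) = y⁻¹ * (C * y) :=
      eq_inv_mul_iff_mul_eq.mpr h2.symm
    rw [hB', hC']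
    calc A * (y⁻¹ * (B * y))
        = (A * y⁻¹) * (B * y) := by group
      _ = (y⁻¹ * A) * (B * y) := by rw [hcm.symm.inv_right.eq]
      _ = y⁻¹ * (A * B) * y := by group
      _ = y⁻¹ * (B * C) * y := by rw [IH']
      _ = (y⁻¹ * (B * y)) * (y⁻¹ * (C * y)) := by group

end Aux

theorem stmt0 (n p q r : ℕ) (hp : 1 ≤ p) (hpq : p < q) (hqr : q < r) (hrn : r ≤ n) :
    a n p q * a n q r = a n q r * a n p r := by
  obtain ⟨t, k, rfl, rfl⟩ : ∃ t k, q = t + 1 ∧ r = t + 2 + k :=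
    ⟨q - 1, r - q - 1, by omega, by omega⟩
  exact key k p t hp (by omega) (by omega)
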